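/- Let k, l ∈ ℕ, let H_0 be an infinite pairwise prime subset of ℕ, and let A be a (2l+1)-syndetic set such that there do NOT exist x, r ∈ ℕ and n ∈ H_0 with r ≡ 1 (mod n), x ∈ A and x·n^k·r ∈ A. Let F ⊆ T(l)\{1} be such that (F, h, l) is an A-Triveni triplet for every h ∈ ℕ. Then there exists F' ⊆ T(l)\{1} with F ⊊ F' such that (F', h, l) is an A-Triveni triplet for every h ∈ ℕ. -/

import Mathlib

/-- `A` is `l`-syndetic: it meets every block of `l` consecutive positive integers. -/
def SyndeticWith (A : Set ℕ) (l : ℕ) : Prop :=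
  ∀ n : ℕ, 0 < n → ∃ m ∈ A, n ≤ m ∧ m < n + l

/-- `A` is syndetic if it is `l`-syndetic for some positive integer `l`. -/
def Syndetic (A : Set ℕ) : Prop :=
  ∃ l : ℕ, 0 < l ∧ SyndeticWith A l

/-- A pairwise prime subset of the positive integers. -/
def PairwisePrimeSet (B : Set ℕ) : Prop :=
  (∀ x ∈ B, 0 < x) ∧ ∀ a ∈ B, ∀ b ∈ B, a ≠ b → Nat.Coprime a b

/-- `r(p,l)`: the largest `t` with `p ^ t ≤ 2 * l + 1`. -/
def rpl (p l : ℕ) : ℕ := Nat.findGreatest (fun t => p ^ t ≤ 2 * l + 1) (2 * l + 1)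

/-- `T(l)`: products `∏_{p prime, p ≤ 2l+1} p ^ (r_p)` with `0 ≤ r_p ≤ r(p,l)`. -/
def Tset (l : ℕ) : Set ℕ :=
  {m | ∃ r : ℕ → ℕ, (∀ p, r p ≤ rpl p l) ∧
    m = ∏ p ∈ (Finset.range (2 * l + 2)).filter Nat.Prime, p ^ r p}

/-- `(F, h, l)` is a Triveni triplet with respect to `A`. -/
def TriveniTriplet (A F : Set ℕ) (h l : ℕ) : Prop :=
  F ⊆ Tset l \ {1} ∧
  ∃ B : ℕ → Set ℕ,
    (∀ u ∈ F, PairwisePrimeSet (B u) ∧ (B u).ncard = h ∧ ∀ x ∈ B u, u * x ∈ A) ∧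
    (∀ u ∈ F, ∀ v ∈ F, u ≠ v → ∀ x ∈ B u, ∀ y ∈ B v, Nat.Coprime x y)

namespace Triveni16

/-- all prime factors exceed `2l+1` -/
def Rough (l x : ℕ) : Prop := ∀ p, Nat.Prime p → p ≤ 2*l+1 → ¬ p ∣ x

def Pfin (l : ℕ) : Finset ℕ := (Finset.range (2*l+2)).filter Nat.Prime

def PP (l : ℕ) : ℕ := ∏ p ∈ Pfin l, p ^ (2*l+2)

lemma mem_Pfin {l p : ℕ} : p ∈ Pfin l ↔ p.Prime ∧ p ≤ 2*l+1 := by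
  simp [Pfin, Finset.mem_filter, Finset.mem_range, Nat.lt_succ_iff, and_comm]

lemma coprime_of_no_common_prime {a b : ℕ}
    (h : ∀ p, p.Prime → p ∣ a → p ∣ b → False) : Nat.Coprime a b := by
  by_contra hg
  obtain ⟨p, hp, hpd⟩ := Nat.exists_prime_and_dvd hg
  exact h p hp (hpd.trans (Nat.gcd_dvd_left a b)) (hpd.trans (Nat.gcd_dvd_right a b))

lemma coprime_of_small_of_rough {l u z : ℕ} (hu0 : 0 < u) (hu : u ≤ 2*l+1)
    (hz : Rough l z) : Nat.Coprime u z := by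
  refine coprime_of_no_common_prime fun p hp hpu hpz => ?_
  exact hz p hp (le_trans (Nat.le_of_dvd hu0 hpu) hu) hpz

lemma rough_coprime_of_rough_left {l x b : ℕ} (hx : Rough l x)
    (hb : ∀ q, q.Prime → q ∣ x → q ∣ b → False) : Nat.Coprime x b :=
  coprime_of_no_common_prime hb

lemma PP_pos {l : ℕ} : 0 < PP l := by
  refine Finset.prod_pos fun p hp => ?_
  exact pow_pos (mem_Pfin.1 hp).1.pos _

lemma pow_succ_dvd_PP {l p v : ℕ} (hp : p.Prime) (hple : p ≤ 2*l+1)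
    (hv : p ^ v ≤ 2*l+1) : p ^ (v+1) ∣ PP l := by
  have h2 : 2 ≤ p := hp.two_le
  have hvlt : v < 2*l+2 := by
    by_contra hvv
    push_neg at hvv
    have : 2^(2*l+2) ≤ p ^ v := le_trans (Nat.pow_le_pow_left h2 _) (Nat.pow_le_pow_right hp.pos hvv)
    have : 2*l+2 < 2^(2*l+2) := Nat.lt_two_pow_self
    omega
  have h1 : p ^ (v+1) ∣ p ^ (2*l+2) := pow_dvd_pow _ (by omega)
  exact h1.trans (Finset.dvd_prod_of_mem _ (mem_Pfin.2 ⟨hp, hple⟩))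

lemma factorization_lt {l i p : ℕ} (hi : 0 < i) (hle : i ≤ 2*l+1) (hp : p.Prime) :
    i.factorization p < 2*l+2 := by
  have h1 : p ^ i.factorization p ∣ i := Nat.ordProj_dvd i p
  have h2 : p ^ i.factorization p ≤ 2*l+1 := le_trans (Nat.le_of_dvd hi h1) hle
  by_contra hvv
  push_neg at hvv
  have h3 : 2^(2*l+2) ≤ p ^ i.factorization p :=
    le_trans (Nat.pow_le_pow_left hp.two_le _) (Nat.pow_le_pow_right hp.pos hvv)
  have h4 : 2*l+2 < 2^(2*l+2) := Nat.lt_two_pow_self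
  omega

lemma dvd_PP_of_le {l i : ℕ} (hi : 0 < i) (hle : i ≤ 2*l+1) : i ∣ PP l := by
  have h0 : i ≠ 0 := hi.ne'
  have h1 := (Nat.factorization_prod_pow_eq_self h0).symm
  rw [Finsupp.prod, Nat.support_factorization] at h1
  rw [h1]
  have h2 : ∏ p ∈ i.primeFactors, p ^ i.factorization p ∣
      ∏ p ∈ i.primeFactors, p ^ (2*l+2) := by
    refine Finset.prod_dvd_prod_of_dvd _ _ fun p hp => ?_
    exact pow_dvd_pow p (le_of_lt (factorization_lt hi hle (Nat.prime_of_mem_primeFactors hp)))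
  refine h2.trans (Finset.prod_dvd_prod_of_subset _ _ _ fun p hp => mem_Pfin.2 ⟨Nat.prime_of_mem_primeFactors hp, le_trans (Nat.le_of_dvd hi (Nat.dvd_of_mem_primeFactors hp)) hle⟩)


lemma crt_finset {ι : Type*} [DecidableEq ι] (s : Finset ι) (μ r : ι → ℕ) :
    (∀ i ∈ s, ∀ j ∈ s, i ≠ j → Nat.Coprime (μ i) (μ j)) →
    ∃ m, ∀ i ∈ s, m ≡ r i [MOD μ i] := by
  induction s using Finset.induction_on with
  | empty => exact fun _ => ⟨0, by simp⟩
  | @insert a s ha ih =>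
    intro h
    obtain ⟨m0, hm0⟩ := ih fun i hi j hj hij =>
      h i (Finset.mem_insert_of_mem hi) j (Finset.mem_insert_of_mem hj) hij
    have hcop : Nat.Coprime (μ a) (∏ i ∈ s, μ i) :=
      Nat.Coprime.prod_right fun i hi =>
        h a (Finset.mem_insert_self a s) i (Finset.mem_insert_of_mem hi)
          (fun e => ha (e ▸ hi))
    obtain ⟨m, hm1, hm2⟩ := Nat.chineseRemainder hcop (r a) m0
    refine ⟨m, fun i hi => ?_⟩
    rcases Finset.mem_insert.1 hi with rfl | hi'
    · exact hm1
    · exact ((Nat.ModEq.of_dvd (Finset.dvd_prod_of_mem μ hi') hm2)).trans (hm0 i hi')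

lemma crt_finset_ge {ι : Type*} [DecidableEq ι] (s : Finset ι) (μ r : ι → ℕ) (G B : ℕ)
    (hG : 0 < G) (hμ : ∀ i ∈ s, 0 < μ i)
    (h : ∀ i ∈ s, ∀ j ∈ s, i ≠ j → Nat.Coprime (μ i) (μ j))
    (hGμ : ∀ i ∈ s, Nat.Coprime G (μ i)) :
    ∃ m, B ≤ m ∧ G ∣ m ∧ ∀ i ∈ s, m ≡ r i [MOD μ i] := by
  obtain ⟨m0, hm0⟩ := crt_finset s μ r h
  have hcop : Nat.Coprime G (∏ i ∈ s, μ i) := Nat.Coprime.prod_right hGμ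
  obtain ⟨m1, h1, h2⟩ := Nat.chineseRemainder hcop 0 m0
  set Q := G * ∏ i ∈ s, μ i with hQ
  have hQpos : 0 < Q := mul_pos hG (Finset.prod_pos hμ)
  refine ⟨m1 + B * Q, ?_, ?_, ?_⟩
  · have h3 : B * 1 ≤ B * Q := Nat.mul_le_mul_left B hQpos
    omega
  · have hd : G ∣ m1 := (Nat.modEq_zero_iff_dvd).1 h1
    exact Nat.dvd_add hd (Dvd.dvd.mul_left (dvd_mul_right G _) B)
  · intro i hi
    have hdQ : μ i ∣ B * Q := Dvd.dvd.mul_left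
      (Dvd.dvd.mul_left (Finset.dvd_prod_of_mem μ hi) G) B
    have h3 : m1 + B * Q ≡ m1 [MOD μ i] := by
      have := (Nat.modEq_iff_dvd' (Nat.le_add_right m1 (B * Q))).2 (by simpa using hdQ)
      exact this.symm
    exact (h3.trans (Nat.ModEq.of_dvd (Finset.dvd_prod_of_mem μ hi) h2)).trans (hm0 i hi)

lemma mem_Tset_of_le {l i : ℕ} (hi : 0 < i) (hle : i ≤ 2*l+1) : i ∈ Tset l := by
  classical
  refine ⟨fun p => if p.Prime then i.factorization p else 0, ?_, ?_⟩
  · intro p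
    by_cases hp : p.Prime
    · simp only [hp, if_true]
      refine Nat.le_findGreatest ?_ ?_
      · have := factorization_lt hi hle hp; omega
      · exact le_trans (Nat.le_of_dvd hi (Nat.ordProj_dvd i p)) hle
    · simp [hp, rpl]
  · have h1 := (Nat.factorization_prod_pow_eq_self hi.ne').symm
    rw [Finsupp.prod, Nat.support_factorization] at h1
    have hsub : i.primeFactors ⊆ (Finset.range (2*l+2)).filter Nat.Prime := by
      intro p hp
      rw [Finset.mem_filter, Finset.mem_range]
      constructor
      · have := le_trans (Nat.le_of_dvd hi (Nat.dvd_of_mem_primeFactors hp)) hle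
        omega
      · exact Nat.prime_of_mem_primeFactors hp
    calc i = ∏ p ∈ i.primeFactors, p ^ i.factorization p := h1
      _ = ∏ p ∈ (Finset.range (2*l+2)).filter Nat.Prime, p ^ i.factorization p := by
          refine Finset.prod_subset hsub fun p hp hnp => ?_
          have : i.factorization p = 0 := by
            have := Nat.support_factorization i
            have h4 : p ∉ i.factorization.support := by rw [this]; exact hnp
            exact Finsupp.notMem_support_iff.1 h4
          rw [this, pow_zero]
      _ = ∏ p ∈ (Finset.range (2*l+2)).filter Nat.Prime,
            p ^ (if p.Prime then i.factorization p else 0) := by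
          refine Finset.prod_congr rfl fun p hp => ?_
          rw [if_pos (Finset.mem_filter.1 hp).2]

lemma Tset_pos {l m : ℕ} (h : m ∈ Tset l) : 0 < m := by
  obtain ⟨r, _, rfl⟩ := h
  refine Finset.prod_pos fun p hp => pow_pos (Nat.Prime.pos (Finset.mem_filter.1 hp).2) _

lemma Tset_finite (l : ℕ) : (Tset l).Finite := by
  refine Set.Finite.subset (Set.finite_Icc 0 (∏ p ∈ Pfin l, p ^ (rpl p l))) ?_
  rintro m ⟨r, hr, rfl⟩
  simp only [Set.mem_Icc]
  refine ⟨Nat.zero_le _, Finset.prod_le_prod' fun p hp => ?_⟩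
  exact Nat.pow_le_pow_right (Nat.Prime.pos (mem_Pfin.1 hp).1) (hr p)

lemma triveni_mono {A F : Set ℕ} {h h' l : ℕ} (hle : h ≤ h')
    (ht : TriveniTriplet A F h' l) : TriveniTriplet A F h l := by
  obtain ⟨hsub, B, h1, h2⟩ := ht
  classical
  have hch : ∀ u, ∃ t : Set ℕ, u ∈ F → t ⊆ B u ∧ t.ncard = h := by
    intro u
    by_cases hu : u ∈ F
    · obtain ⟨t, ht1, ht2⟩ := Set.exists_subset_card_eq (s := B u) (n := h)
        (by rw [(h1 u hu).2.1]; exact hle)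
      exact ⟨t, fun _ => ⟨ht1, ht2⟩⟩
    · exact ⟨∅, fun hu' => absurd hu' hu⟩
  choose B' hB' using hch
  refine ⟨hsub, B', fun u hu => ?_, fun u hu v hv huv x hx y hy => ?_⟩
  · obtain ⟨hsubu, hcard⟩ := hB' u hu
    obtain ⟨hpos, hcop⟩ := (h1 u hu).1
    exact ⟨⟨fun x hx => hpos x (hsubu hx),
      fun a ha b hb => hcop a (hsubu ha) b (hsubu hb)⟩, hcard,
      fun x hx => (h1 u hu).2.2 x (hsubu hx)⟩
  · exact h2 u hu v hv huv x ((hB' u hu).1 hx) y ((hB' v hv).1 hy)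


lemma rough_mul {l a b : ℕ} (ha : Rough l a) (hb : Rough l b) : Rough l (a * b) := by
  intro p hp hple hd
  rcases (Nat.Prime.dvd_mul hp).1 hd with h | h
  · exact ha p hp hple h
  · exact hb p hp hple h

lemma rough_pow {l a e : ℕ} (ha : Rough l a) : Rough l (a ^ e) := by
  intro p hp hple hd
  exact ha p hp hple (hp.dvd_of_dvd_pow hd)

lemma window (k l : ℕ) (hk : 0 < k) (A H0 : Set ℕ)
    (hA : SyndeticWith A (2*l+1))
    (hnot : ¬∃ x r n : ℕ, n ∈ H0 ∧ 0 < r ∧ r ≡ 1 [MOD n] ∧ x ∈ A ∧ x * n ^ k * r ∈ A)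
    (Φ : Finset ℕ) (z n : ℕ → ℕ) (G : ℕ)
    (hΦ : ∀ i ∈ Φ, 1 ≤ i ∧ i ≤ 2*l+1)
    (hz : ∀ i ∈ Φ, 0 < z i ∧ Rough l (z i) ∧ i * z i ∈ A)
    (hn : ∀ i ∈ Φ, n i ∈ H0 ∧ 0 < n i ∧ Rough l (n i))
    (hpair : ∀ i ∈ Φ, ∀ j ∈ Φ, i ≠ j → Nat.Coprime (z i * n i) (z j * n j))
    (hG0 : 0 < G) (hGPP : PP l ∣ G)
    (hGz : ∀ i ∈ Φ, Nat.Coprime G (z i * n i)) :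
    ∃ i' x, 1 ≤ i' ∧ i' ≤ 2*l+1 ∧ i' ∉ Φ ∧ 1 < x ∧ Rough l x ∧
      Nat.Coprime x G ∧ (∀ i ∈ Φ, Nat.Coprime x (z i * n i)) ∧ i' * x ∈ A := by
  classical
  set μ : ℕ → ℕ := fun i => z i * n i ^ (k+1) with hμdef
  set rr : ℕ → ℕ := fun i => i * z i * n i ^ k - i with hrrdef
  set B : ℕ := (∑ i ∈ Φ, i * z i * n i ^ k) + 4*l + 4 with hBdef
  have hμpos : ∀ i ∈ Φ, 0 < μ i := fun i hi =>
    mul_pos (hz i hi).1 (pow_pos (hn i hi).2.1 _)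
  have hcomps : ∀ i ∈ Φ, ∀ j ∈ Φ, i ≠ j →
      Nat.Coprime (z i) (z j) ∧ Nat.Coprime (z i) (n j) ∧
      Nat.Coprime (n i) (z j) ∧ Nat.Coprime (n i) (n j) := by
    intro i hi j hj hij
    have h0 := hpair i hi j hj hij
    have hzi : Nat.Coprime (z i) (z j * n j) :=
      Nat.Coprime.coprime_dvd_left (dvd_mul_right _ _) h0
    have hni : Nat.Coprime (n i) (z j * n j) :=
      Nat.Coprime.coprime_dvd_left (dvd_mul_left _ _) h0
    exact ⟨hzi.coprime_dvd_right (dvd_mul_right _ _),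
      hzi.coprime_dvd_right (dvd_mul_left _ _),
      hni.coprime_dvd_right (dvd_mul_right _ _),
      hni.coprime_dvd_right (dvd_mul_left _ _)⟩
  have hpair' : ∀ i ∈ Φ, ∀ j ∈ Φ, i ≠ j → Nat.Coprime (μ i) (μ j) := by
    intro i hi j hj hij
    obtain ⟨c1, c2, c3, c4⟩ := hcomps i hi j hj hij
    exact (c1.mul_right (c2.pow_right _)).mul
      (((c3.pow_left _).mul_right ((c4.pow_left _).pow_right _)))
  have hGμ : ∀ i ∈ Φ, Nat.Coprime G (μ i) := by
    intro i hi
    have h0 := hGz i hi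
    exact (h0.coprime_dvd_right (dvd_mul_right _ _)).mul_right
      ((h0.coprime_dvd_right (dvd_mul_left _ _)).pow_right _)
  obtain ⟨m, hmB, hGm, hmod⟩ := crt_finset_ge Φ μ rr G B hG0 hμpos hpair' hGμ
  obtain ⟨a, haA, ha1, ha2⟩ := hA (m+1) (by omega)
  have hroughμ : ∀ i ∈ Φ, Rough l (μ i) := fun i hi =>
    rough_mul (hz i hi).2.1 (rough_pow (hn i hi).2.2)
  -- forbidden slots cannot contain elements of A
  have hforb : ∀ i ∈ Φ, (m + i) ∉ A := by
    intro i hi hmem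
    obtain ⟨hich1, hich2⟩ := hΦ i hi
    obtain ⟨hz1, hz2, hz3⟩ := hz i hi
    obtain ⟨hn1, hn2, hn3⟩ := hn i hi
    have him : i ∣ m := ((dvd_PP_of_le hich1 hich2).trans hGPP).trans hGm
    have hsum : i * z i * n i ^ k ≤ ∑ j ∈ Φ, j * z j * n j ^ k :=
      Finset.single_le_sum (f := fun j => j * z j * n j ^ k) (fun j _ => Nat.zero_le _) hi
    have hrrm : rr i ≤ m := by
      have : rr i ≤ i * z i * n i ^ k := Nat.sub_le _ _
      omega
    have h5 : μ i ∣ m - rr i := (Nat.modEq_iff_dvd' hrrm).1 (hmod i hi).symm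
    have hile : i ≤ i * z i * n i ^ k := by
      calc i = i * 1 := (mul_one i).symm
        _ ≤ i * (z i * n i ^ k) := Nat.mul_le_mul_left i
            (Nat.one_le_iff_ne_zero.2 (mul_pos hz1 (pow_pos hn2 k)).ne')
        _ = i * z i * n i ^ k := (mul_assoc _ _ _).symm
    have hirr : i ∣ rr i := by
      refine Nat.dvd_sub ?_ dvd_rfl
      exact Dvd.dvd.mul_right (Dvd.dvd.mul_right dvd_rfl _) _
    have hiw : i ∣ m - rr i := Nat.dvd_sub him hirr
    have hcopiμ : Nat.Coprime i (μ i) :=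
      coprime_of_small_of_rough hich1 hich2 (hroughμ i hi)
    obtain ⟨t, ht⟩ := Nat.Coprime.mul_dvd_of_dvd_of_dvd hcopiμ hiw h5
    have hkey : m + i = (i * z i) * n i ^ k * (1 + n i * t) := by
      have e1 : (m - rr i) + rr i = m := Nat.sub_add_cancel hrrm
      have e2 : rr i + i = i * z i * n i ^ k := Nat.sub_add_cancel hile
      have : m + i = i * μ i * t + (rr i + i) := by omega
      rw [this, e2, hμdef]
      ring
    exact hnot ⟨i * z i, 1 + n i * t, n i, hn1, by omega,
      by unfold Nat.ModEq; simp [Nat.add_mul_mod_self_left],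
      hz3, by rw [← hkey]; exact hmem⟩
  set i' : ℕ := a - m with hi'def
  have hi'1 : 1 ≤ i' := by omega
  have hi'2 : i' ≤ 2*l+1 := by omega
  have hai : a = m + i' := by omega
  have hi'Φ : i' ∉ Φ := fun hmem => hforb i' hmem (hai ▸ haA)
  have hi'm : i' ∣ m := ((dvd_PP_of_le hi'1 hi'2).trans hGPP).trans hGm
  have hi'dvd : i' ∣ m + i' := Nat.dvd_add hi'm dvd_rfl
  set x : ℕ := (m + i') / i' with hxdef
  have hxeq : i' * x = m + i' := Nat.mul_div_cancel' hi'dvd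
  have hmB4 : 4*l+4 ≤ m := by omega
  have hx1 : 1 < x := by
    by_contra hx
    push_neg at hx
    have : i' * x ≤ i' * 1 := Nat.mul_le_mul_left i' hx
    omega
  have hxrough : Rough l x := by
    intro p hp hple hpx
    have hpi : p ^ (i'.factorization p) ∣ i' := Nat.ordProj_dvd i' p
    have hple2 : p ^ (i'.factorization p) ≤ 2*l+1 :=
      le_trans (Nat.le_of_dvd (by omega) hpi) hi'2
    have hsucc : p ^ (i'.factorization p + 1) ∣ PP l := pow_succ_dvd_PP hp hple hple2
    have hdm : p ^ (i'.factorization p + 1) ∣ m := (hsucc.trans hGPP).trans hGm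
    have hdmi : p ^ (i'.factorization p + 1) ∣ m + i' := by
      have : p * p ^ (i'.factorization p) ∣ x * i' := mul_dvd_mul hpx hpi
      rw [pow_succ]
      rw [mul_comm (p ^ (i'.factorization p)) p] at *
      calc p * p ^ i'.factorization p ∣ x * i' := this
        _ = m + i' := by rw [mul_comm]; exact hxeq
    have : p ^ (i'.factorization p + 1) ∣ i' := by
      have h7 := Nat.dvd_sub hdmi hdm
      simpa using h7
    exact Nat.pow_succ_factorization_not_dvd (by omega : i' ≠ 0) hp this
  have hxG : Nat.Coprime x G := by
    refine coprime_of_no_common_prime fun q hq hqx hqG => ?_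
    have hqmi : q ∣ m + i' := hqx.trans ⟨i', by rw [mul_comm]; exact hxeq.symm⟩
    have hqm : q ∣ m := hqG.trans hGm
    have hqi : q ∣ i' := by
      have := Nat.dvd_sub hqmi hqm
      simpa using this
    exact hxrough q hq (le_trans (Nat.le_of_dvd (by omega) hqi) hi'2) hqx
  have hxzn : ∀ i ∈ Φ, Nat.Coprime x (z i * n i) := by
    intro i hi
    obtain ⟨hich1, hich2⟩ := hΦ i hi
    obtain ⟨hz1, hz2, hz3⟩ := hz i hi
    obtain ⟨hn1, hn2, hn3⟩ := hn i hi
    refine coprime_of_no_common_prime fun q hq hqx hqzn => ?_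
    have hqbig : 2*l+1 < q := by
      by_contra hsm
      push_neg at hsm
      exact (rough_mul hz2 hn3) q hq hsm hqzn
    have hqmi' : q ∣ m + i' := hqx.trans ⟨i', by rw [mul_comm]; exact hxeq.symm⟩
    -- q divides m + i
    have hsum : i * z i * n i ^ k ≤ ∑ j ∈ Φ, j * z j * n j ^ k :=
      Finset.single_le_sum (f := fun j => j * z j * n j ^ k) (fun j _ => Nat.zero_le _) hi
    have hrrm : rr i ≤ m := by
      have : rr i ≤ i * z i * n i ^ k := Nat.sub_le _ _
      omega
    have h5 : μ i ∣ m - rr i := (Nat.modEq_iff_dvd' hrrm).1 (hmod i hi).symm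
    have hqμ : q ∣ μ i := by
      rcases (Nat.Prime.dvd_mul hq).1 hqzn with h | h
      · exact h.trans (dvd_mul_right _ _)
      · exact (h.trans (dvd_pow_self _ (by omega : k+1 ≠ 0))).trans (dvd_mul_left _ _)
    have hqw : q ∣ m - rr i := hqμ.trans h5
    have hile : i ≤ i * z i * n i ^ k := by
      calc i = i * 1 := (mul_one i).symm
        _ ≤ i * (z i * n i ^ k) := Nat.mul_le_mul_left i
            (Nat.one_le_iff_ne_zero.2 (mul_pos hz1 (pow_pos hn2 k)).ne')
        _ = i * z i * n i ^ k := (mul_assoc _ _ _).symm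
    have hqrri : q ∣ rr i + i := by
      rw [Nat.sub_add_cancel hile]
      rcases (Nat.Prime.dvd_mul hq).1 hqzn with h | h
      · exact Dvd.dvd.mul_right (h.trans (dvd_mul_left _ _)) _
      · exact Dvd.dvd.mul_left (h.trans (dvd_pow_self _ hk.ne')) _
    have hqmi : q ∣ m + i := by
      have e1 : (m - rr i) + (rr i + i) = m + i := by omega
      rw [← e1]
      exact Nat.dvd_add hqw hqrri
    have hii' : i ≠ i' := fun e => hi'Φ (e ▸ hi)
    rcases Nat.lt_or_ge i i' with hlt | hge
    · have := Nat.dvd_sub hqmi' hqmi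
      have he : m + i' - (m + i) = i' - i := by omega
      rw [he] at this
      have := Nat.le_of_dvd (by omega) this
      omega
    · have hlt : i' < i := by omega
      have := Nat.dvd_sub hqmi hqmi'
      have he : m + i - (m + i') = i - i' := by omega
      rw [he] at this
      have := Nat.le_of_dvd (by omega) this
      omega
  exact ⟨i', x, hi'1, hi'2, hi'Φ, hx1, hxrough, hxG, hxzn, by rw [hxeq, ← hai]; exact haA⟩


lemma coprime_PP_of_rough {l t : ℕ} (ht : Rough l t) : Nat.Coprime (PP l) t := by
  refine coprime_of_no_common_prime fun q hq hq1 hq2 => ?_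
  rw [PP] at hq1
  obtain ⟨p, hp, hdp⟩ := (Prime.dvd_finset_prod_iff hq.prime _).1 hq1
  have hqp : q = p := (Nat.prime_dvd_prime_iff_eq hq (mem_Pfin.1 hp).1).1
    (hq.dvd_of_dvd_pow hdp)
  exact ht q hq (hqp ▸ (mem_Pfin.1 hp).2) hq2

open scoped Classical in
lemma card_nonrough_le {l : ℕ} (S : Finset ℕ)
    (hpc : ∀ a ∈ S, ∀ b ∈ S, a ≠ b → Nat.Coprime a b) :
    (S.filter (fun a => ¬ Rough l a)).card ≤ (Pfin l).card := by
  classical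
  set g : ℕ → ℕ := fun a =>
    if hp : ∃ p, p.Prime ∧ p ≤ 2*l+1 ∧ p ∣ a then Classical.choose hp else 0 with hgdef
  have hg : ∀ a ∈ S.filter (fun a => ¬ Rough l a),
      (g a).Prime ∧ g a ≤ 2*l+1 ∧ g a ∣ a := by
    intro a ha
    have h2 := (Finset.mem_filter.1 ha).2
    unfold Rough at h2
    push_neg at h2
    obtain ⟨p, h3, h4, h5⟩ := h2
    have hex : ∃ p, p.Prime ∧ p ≤ 2*l+1 ∧ p ∣ a := ⟨p, h3, h4, h5⟩
    simp only [hgdef, dif_pos hex]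
    exact Classical.choose_spec hex
  refine Finset.card_le_card_of_injOn g ?_ ?_
  · intro a ha
    obtain ⟨h1, h2, h3⟩ := hg a ha
    exact mem_Pfin.2 ⟨h1, h2⟩
  · intro a ha b hb hab
    by_contra hne
    obtain ⟨h1, h2, h3⟩ := hg a (Finset.mem_coe.1 ha)
    obtain ⟨h1', h2', h3'⟩ := hg b (Finset.mem_coe.1 hb)
    have hmemS : a ∈ S := (Finset.mem_filter.1 (Finset.mem_coe.1 ha)).1
    have hmemS' : b ∈ S := (Finset.mem_filter.1 (Finset.mem_coe.1 hb)).1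
    have hcop := hpc a hmemS b hmemS' hne
    have hthis : g a ∣ Nat.gcd a b := Nat.dvd_gcd h3 (hab ▸ h3')
    rw [hcop] at hthis
    exact h1.one_lt.ne' (Nat.dvd_one.1 hthis)

open scoped Classical in
lemma per_h (k l : ℕ) (hk : 0 < k) (hl : 0 < l)
    (H0 : Set ℕ) (hH0inf : H0.Infinite) (hH0 : PairwisePrimeSet H0)
    (A : Set ℕ) (hA : SyndeticWith A (2 * l + 1))
    (hnot : ¬∃ x r n : ℕ, n ∈ H0 ∧ 0 < r ∧ r ≡ 1 [MOD n] ∧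
      x ∈ A ∧ x * n ^ k * r ∈ A)
    (F : Set ℕ) (hF : F ⊆ Tset l \ {1})
    (hTriv : ∀ h : ℕ, 0 < h → TriveniTriplet A F h l)
    (h : ℕ) (hh : 0 < h) :
    ∃ u', u' ∉ F ∧ 2 ≤ u' ∧ u' ≤ 2*l+1 ∧ TriveniTriplet A (F ∪ {u'}) h l := by
  classical
  have h1H0 : (1 : ℕ) ∉ H0 := by
    intro h1
    obtain ⟨a0, ha0, -, -⟩ := hA 1 one_pos
    exact hnot ⟨a0, 1, 1, h1, one_pos, by rfl, ha0, by simpa using ha0⟩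
  have hFfin : F.Finite := Set.Finite.subset (Tset_finite l) fun u hu => (hF hu).1
  set Ffin := hFfin.toFinset with hFfindef
  have hmemF : ∀ u, u ∈ Ffin ↔ u ∈ F := fun u => hFfin.mem_toFinset
  have hF2 : ∀ u ∈ F, 2 ≤ u := by
    intro u hu
    have h1 := Tset_pos (hF hu).1
    have h2 : u ≠ 1 := (hF hu).2
    omega
  obtain ⟨-, B, hB1, hB2⟩ := hTriv (h + 2*l + 2) (by omega)
  have hBfin : ∀ u, u ∈ F → (B u).Finite := fun u hu =>
    Set.finite_of_ncard_ne_zero (by rw [(hB1 u hu).2.1]; omega)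
  set Bf : ℕ → Finset ℕ := fun u => if hu : u ∈ F then (hBfin u hu).toFinset else ∅
    with hBfdef
  have hBfmem : ∀ u, u ∈ F → ∀ x, (x ∈ Bf u ↔ x ∈ B u) := by
    intro u hu x
    simp only [hBfdef, dif_pos hu, Set.Finite.mem_toFinset]
  have hBfcard : ∀ u ∈ F, (Bf u).card = h + 2*l + 2 := by
    intro u hu
    have h1 : ((Bf u : Finset ℕ) : Set ℕ) = B u := by
      ext x
      simp [hBfmem u hu x]
    have h2 := Set.ncard_coe_finset (Bf u)
    rw [h1, (hB1 u hu).2.1] at h2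
    omega
  have hPle : (Pfin l).card ≤ 2*l := by
    have hsub : Pfin l ⊆ Finset.Ioo 1 (2*l+2) := by
      intro p hp
      obtain ⟨h1, h2⟩ := mem_Pfin.1 hp
      rw [Finset.mem_Ioo]
      exact ⟨h1.one_lt, by omega⟩
    calc (Pfin l).card ≤ (Finset.Ioo 1 (2*l+2)).card := Finset.card_le_card hsub
      _ = 2*l := by rw [Nat.card_Ioo]; omega
  -- select rough blockers y u
  have hysel : ∀ u ∈ F, ∃ yy ∈ Bf u, Rough l yy := by
    intro u hu
    by_contra hcon
    push_neg at hcon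
    have hfe : Bf u = (Bf u).filter (fun a => ¬ Rough l a) := by
      symm
      refine Finset.filter_eq_self.2 fun a ha => hcon a ha
    have hle := card_nonrough_le (l := l) (Bf u)
      (fun a ha b hb hab => (hB1 u hu).1.2 a ((hBfmem u hu a).1 ha)
        b ((hBfmem u hu b).1 hb) hab)
    rw [← hfe, hBfcard u hu] at hle
    omega
  choose! y hy1 hy2 using hysel
  have hyB : ∀ u ∈ F, y u ∈ B u := fun u hu => (hBfmem u hu (y u)).1 (hy1 u hu)
  have hypos : ∀ u ∈ F, 0 < y u := fun u hu => (hB1 u hu).1.1 _ (hyB u hu)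
  have hyA : ∀ u ∈ F, u * y u ∈ A := fun u hu => (hB1 u hu).2.2 _ (hyB u hu)
  have hyy : ∀ u ∈ F, ∀ v ∈ F, u ≠ v → Nat.Coprime (y u) (y v) :=
    fun u hu v hv huv => hB2 u hu v hv huv _ (hyB u hu) _ (hyB v hv)
  -- select the final families C u
  have hCsel : ∀ u ∈ F, ∃ CC ⊆ (Bf u).erase (y u), CC.card = h := by
    intro u hu
    refine Finset.exists_subset_card_eq ?_
    have h1 := Finset.card_erase_of_mem (hy1 u hu)
    rw [hBfcard u hu] at h1
    omega
  choose! C hC1 hC2 using hCsel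
  have hCB : ∀ u ∈ F, ∀ c ∈ C u, c ∈ B u := fun u hu c hc =>
    (hBfmem u hu c).1 (Finset.mem_erase.1 (hC1 u hu hc)).2
  -- the product E of all final family elements
  set E : ℕ := ∏ u ∈ Ffin, ∏ b ∈ (Bf u).erase (y u), b with hEdef
  have hbpos : ∀ u ∈ F, ∀ b ∈ Bf u, 0 < b := fun u hu b hb =>
    (hB1 u hu).1.1 b ((hBfmem u hu b).1 hb)
  have hEpos : 0 < E := by
    refine Finset.prod_pos fun u hu => Finset.prod_pos fun b hb => ?_
    exact hbpos u ((hmemF u).1 hu) b (Finset.mem_of_mem_erase hb)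
  have hdvdE : ∀ u ∈ F, ∀ c ∈ C u, c ∣ E := by
    intro u hu c hc
    exact dvd_trans (Finset.dvd_prod_of_mem _ (hC1 u hu hc))
      (Finset.dvd_prod_of_mem _ ((hmemF u).2 hu))
  have hcopB : ∀ w, (∀ u ∈ F, ∀ b ∈ Bf u, b ≠ y u → Nat.Coprime w b) →
      Nat.Coprime w E := by
    intro w hw
    refine Nat.Coprime.prod_right fun u hu => Nat.Coprime.prod_right fun b hb => ?_
    obtain ⟨hbne, hbmem⟩ := Finset.mem_erase.1 hb
    exact hw u ((hmemF u).1 hu) b hbmem hbne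
  have hyE : ∀ u ∈ F, Nat.Coprime (y u) E := by
    intro u hu
    refine hcopB _ fun v hv b hb hbne => ?_
    by_cases huv : u = v
    · subst huv
      exact (hB1 u hu).1.2 _ (hyB u hu) _ ((hBfmem u hu b).1 hb) (fun e => hbne e.symm)
    · exact hB2 u hu v hv huv _ (hyB u hu) _ ((hBfmem v hv b).1 hb)
  -- choose the auxiliary pairwise prime numbers nn j
  set Znum := (∏ p ∈ Pfin l, p) * ∏ u ∈ Ffin, ∏ b ∈ Bf u, b with hZdef
  have hZpos : 0 < Znum := by
    refine mul_pos (Finset.prod_pos fun p hp => (mem_Pfin.1 hp).1.pos) ?_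
    exact Finset.prod_pos fun u hu => Finset.prod_pos fun b hb =>
      hbpos u ((hmemF u).1 hu) b hb
  have hbadfin : {n | n ∈ H0 ∧ ¬ Nat.Coprime n Znum}.Finite := by
    set f : ℕ → ℕ := fun n =>
      if hp : ∃ p, p.Prime ∧ p ∣ n ∧ p ∣ Znum then Classical.choose hp else 0 with hfdef
    have hf : ∀ n ∈ {n | n ∈ H0 ∧ ¬ Nat.Coprime n Znum},
        (f n).Prime ∧ f n ∣ n ∧ f n ∣ Znum := by
      intro n hn
      obtain ⟨hn1, hn2⟩ := hn
      obtain ⟨p, hp1, hp2⟩ := Nat.exists_prime_and_dvd hn2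
      have hex : ∃ p, p.Prime ∧ p ∣ n ∧ p ∣ Znum :=
        ⟨p, hp1, hp2.trans (Nat.gcd_dvd_left _ _), hp2.trans (Nat.gcd_dvd_right _ _)⟩
      simp only [hfdef, dif_pos hex]
      exact Classical.choose_spec hex
    refine Set.Finite.of_finite_image (f := f) ?_ ?_
    · refine Set.Finite.subset (Set.finite_Icc 0 Znum) ?_
      rintro q ⟨n, hn, rfl⟩
      obtain ⟨h1, h2, h3⟩ := hf n hn
      exact Set.mem_Icc.2 ⟨Nat.zero_le _, Nat.le_of_dvd hZpos h3⟩
    · intro a ha b hb hab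
      by_contra hne
      obtain ⟨h1, h2, h3⟩ := hf a ha
      obtain ⟨h1', h2', h3'⟩ := hf b hb
      have hcop := hH0.2 a ha.1 b hb.1 hne
      have : f a ∣ Nat.gcd a b := Nat.dvd_gcd h2 (hab ▸ h2')
      rw [hcop] at this
      exact h1.one_lt.ne' (Nat.dvd_one.1 this)
  have hH0' : (H0 \ ({1} ∪ {n | n ∈ H0 ∧ ¬ Nat.Coprime n Znum})).Infinite :=
    hH0inf.diff ((Set.finite_singleton 1).union hbadfin)
  obtain ⟨Nset, hNsub, hNcard⟩ := hH0'.exists_subset_card_eq (2*l+1)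
  have hIccCard : (Finset.Icc 1 (2*l+1)).card = 2*l+1 := by
    rw [Nat.card_Icc]; omega
  set e1 := Finset.equivFinOfCardEq hNcard with he1
  set e2 := Finset.equivFinOfCardEq hIccCard with he2
  set nn : ℕ → ℕ := fun j =>
    if hj : j ∈ Finset.Icc 1 (2*l+1) then ((e1.symm (e2 ⟨j, hj⟩)) : ℕ) else 1
    with hnndef
  have hnnmem : ∀ j ∈ Finset.Icc 1 (2*l+1),
      nn j ∈ H0 \ ({1} ∪ {n | n ∈ H0 ∧ ¬ Nat.Coprime n Znum}) := by
    intro j hj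
    simp only [hnndef, dif_pos hj]
    exact hNsub (e1.symm (e2 ⟨j, hj⟩)).2
  have hnnH0 : ∀ j ∈ Finset.Icc 1 (2*l+1), nn j ∈ H0 := fun j hj => (hnnmem j hj).1
  have hnnpos : ∀ j ∈ Finset.Icc 1 (2*l+1), 0 < nn j := fun j hj =>
    hH0.1 _ (hnnH0 j hj)
  have hnncopZ : ∀ j ∈ Finset.Icc 1 (2*l+1), Nat.Coprime (nn j) Znum := by
    intro j hj
    have h2 := (hnnmem j hj).2
    by_contra hcon
    exact h2 (Or.inr ⟨hnnH0 j hj, hcon⟩)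
  have hnnrough : ∀ j ∈ Finset.Icc 1 (2*l+1), Rough l (nn j) := by
    intro j hj p hp hple hpd
    have h1 : p ∣ Znum := dvd_mul_of_dvd_left
      (Finset.dvd_prod_of_mem _ (mem_Pfin.2 ⟨hp, hple⟩)) _
    have h2 : p ∣ Nat.gcd (nn j) Znum := Nat.dvd_gcd hpd h1
    rw [hnncopZ j hj] at h2
    exact hp.one_lt.ne' (Nat.dvd_one.1 h2)
  have hnninj : ∀ i ∈ Finset.Icc 1 (2*l+1), ∀ j ∈ Finset.Icc 1 (2*l+1),
      i ≠ j → nn i ≠ nn j := by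
    intro i hi j hj hij heq
    simp only [hnndef, dif_pos hi, dif_pos hj] at heq
    have h0 : e1.symm (e2 ⟨i, hi⟩) = e1.symm (e2 ⟨j, hj⟩) := Subtype.ext heq
    have h1 := e2.injective (e1.symm.injective h0)
    exact hij (congrArg Subtype.val h1)
  have hnnpair : ∀ i ∈ Finset.Icc 1 (2*l+1), ∀ j ∈ Finset.Icc 1 (2*l+1),
      i ≠ j → Nat.Coprime (nn i) (nn j) := fun i hi j hj hij =>
    hH0.2 _ (hnnH0 i hi) _ (hnnH0 j hj) (hnninj i hi j hj hij)
  have hBdvdZ : ∀ u ∈ F, ∀ b ∈ Bf u, b ∣ Znum := by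
    intro u hu b hb
    exact dvd_mul_of_dvd_right (dvd_trans (Finset.dvd_prod_of_mem _ hb)
      (Finset.dvd_prod_of_mem _ ((hmemF u).2 hu))) _
  have hnnB : ∀ j ∈ Finset.Icc 1 (2*l+1), ∀ u ∈ F, ∀ b ∈ Bf u,
      Nat.Coprime (nn j) b := fun j hj u hu b hb =>
    (hnncopZ j hj).coprime_dvd_right (hBdvdZ u hu b hb)
  have hEdvdZ : E ∣ Znum := by
    refine dvd_mul_of_dvd_right (Finset.prod_dvd_prod_of_dvd _ _ fun u hu => ?_) _
    exact Finset.prod_dvd_prod_of_subset _ _ _ (Finset.erase_subset _ _)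
  have hnnE : ∀ j ∈ Finset.Icc 1 (2*l+1), Nat.Coprime (nn j) E :=
    fun j hj => (hnncopZ j hj).coprime_dvd_right hEdvdZ
  set F₀ : Finset ℕ := Ffin.filter (fun u => u ≤ 2*l+1) with hF₀def
  have hF₀mem : ∀ u, u ∈ F₀ ↔ u ∈ F ∧ u ≤ 2*l+1 := by
    intro u
    rw [hF₀def, Finset.mem_filter, hmemF]
  have hF₀Icc : ∀ u ∈ F₀, u ∈ Finset.Icc 1 (2*l+1) := by
    intro u hu
    obtain ⟨h1, h2⟩ := (hF₀mem u).1 hu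
    have := hF2 u h1
    rw [Finset.mem_Icc]
    omega
  -- invariant
  set PairProp : ℕ × ℕ → Prop := fun p =>
    2 ≤ p.1 ∧ p.1 ≤ 2*l+1 ∧ p.1 ∉ F ∧ 1 < p.2 ∧ Rough l p.2 ∧ p.1 * p.2 ∈ A ∧
    Nat.Coprime p.2 E ∧ (∀ u ∈ F₀, Nat.Coprime p.2 (y u)) ∧
    (∀ j ∈ Finset.Icc 1 (2*l+1), Nat.Coprime p.2 (nn j)) with hPPdef
  set AProp : ℕ → Prop := fun a => a ∈ A ∧ Rough l a ∧ 1 < a ∧ Nat.Coprime a E ∧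
    (∀ u ∈ F₀, Nat.Coprime a (y u)) ∧
    (∀ j ∈ Finset.Icc 1 (2*l+1), Nat.Coprime a (nn j)) with hAPdef
  set Inv : List (ℕ × ℕ) → Option ℕ → Prop := fun L o =>
    (∀ p ∈ L, PairProp p) ∧
    L.Pairwise (fun p q => Nat.Coprime p.2 q.2 ∧ p.2 ≠ q.2) ∧
    (∀ a, o = some a → AProp a ∧ ∀ p ∈ L, Nat.Coprime p.2 a) with hInvdef
  -- one window step given slot data
  have hcore : ∀ (L : List (ℕ × ℕ)) (Φ : Finset ℕ) (zf : ℕ → ℕ),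
      (∀ p ∈ L, PairProp p) →
      (∀ i ∈ Φ, i ∈ Finset.Icc 1 (2*l+1)) →
      (∀ i ∈ Φ, 0 < zf i ∧ Rough l (zf i) ∧ i * zf i ∈ A) →
      (∀ i ∈ Φ, Nat.Coprime (zf i) E) →
      (∀ i ∈ Φ, ∀ j ∈ Φ, i ≠ j → Nat.Coprime (zf i) (zf j)) →
      (∀ i ∈ Φ, ∀ j ∈ Finset.Icc 1 (2*l+1), Nat.Coprime (zf i) (nn j)) →
      (∀ i ∈ Φ, ∀ p ∈ L, Nat.Coprime p.2 (zf i)) →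
      ∃ i' x, 1 ≤ i' ∧ i' ≤ 2*l+1 ∧ i' ∉ Φ ∧ 1 < x ∧ Rough l x ∧ i' * x ∈ A ∧
        Nat.Coprime x E ∧ (∀ j ∈ Finset.Icc 1 (2*l+1), Nat.Coprime x (nn j)) ∧
        (∀ p ∈ L, Nat.Coprime x p.2) ∧ (∀ i ∈ Φ, Nat.Coprime x (zf i)) := by
    intro L Φ zf hL hΦIcc hz0 hzE hzpair hznn hzx
    set X : Finset ℕ := (L.map Prod.snd).toFinset with hXdef
    have hXmem : ∀ p ∈ L, p.2 ∈ X := by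
      intro p hp
      rw [hXdef, List.mem_toFinset]
      exact List.mem_map_of_mem (f := Prod.snd) hp
    have hXprop : ∀ b ∈ X, ∃ p ∈ L, p.2 = b := by
      intro b hb
      rw [hXdef, List.mem_toFinset, List.mem_map] at hb
      exact hb
    set G : ℕ := ((PP l * E) * ∏ j ∈ (Finset.Icc 1 (2*l+1)) \ Φ, nn j) *
      ∏ b ∈ X, b with hGdef
    have hG0 : 0 < G := by
      refine mul_pos (mul_pos (mul_pos PP_pos hEpos) ?_) ?_
      · exact Finset.prod_pos fun j hj => hnnpos j (Finset.mem_sdiff.1 hj).1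
      · refine Finset.prod_pos fun b hb => ?_
        obtain ⟨p, hp, rfl⟩ := hXprop b hb
        have := (hL p hp).2.2.2.1
        omega
    have hGPP : PP l ∣ G := by
      refine dvd_mul_of_dvd_left (dvd_mul_of_dvd_left (dvd_mul_right _ _) _) _
    have hEG : E ∣ G := by
      refine dvd_mul_of_dvd_left (dvd_mul_of_dvd_left (dvd_mul_left _ _) _) _
    have hXG : ∀ p ∈ L, p.2 ∣ G :=
      fun p hp => dvd_mul_of_dvd_right (Finset.dvd_prod_of_mem _ (hXmem p hp)) _
    have hnnG : ∀ j ∈ Finset.Icc 1 (2*l+1), j ∉ Φ → nn j ∣ G := by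
      intro j hj hjn
      exact dvd_mul_of_dvd_left (dvd_mul_of_dvd_right
        (Finset.dvd_prod_of_mem _ (Finset.mem_sdiff.2 ⟨hj, hjn⟩)) _) _
    have hGzn : ∀ i ∈ Φ, Nat.Coprime G (zf i * nn i) := by
      intro i hi
      have hiIcc := hΦIcc i hi
      have c1 : Nat.Coprime (PP l) (zf i) := coprime_PP_of_rough (hz0 i hi).2.1
      have c1' : Nat.Coprime (PP l) (nn i) := coprime_PP_of_rough (hnnrough i hiIcc)
      have c2 : Nat.Coprime E (zf i) := (hzE i hi).symm
      have c2' : Nat.Coprime E (nn i) := (hnnE i hiIcc).symm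
      have c3 : Nat.Coprime (∏ j ∈ (Finset.Icc 1 (2*l+1)) \ Φ, nn j) (zf i) := by
        refine Nat.Coprime.prod_left fun j hj => ?_
        exact (hznn i hi j (Finset.mem_sdiff.1 hj).1).symm
      have c3' : Nat.Coprime (∏ j ∈ (Finset.Icc 1 (2*l+1)) \ Φ, nn j) (nn i) := by
        refine Nat.Coprime.prod_left fun j hj => ?_
        obtain ⟨hj1, hj2⟩ := Finset.mem_sdiff.1 hj
        exact hnnpair j hj1 i hiIcc (fun e => hj2 (e ▸ hi))
      have c4 : Nat.Coprime (∏ b ∈ X, b) (zf i) := by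
        refine Nat.Coprime.prod_left fun b hb => ?_
        obtain ⟨p, hp, rfl⟩ := hXprop b hb
        exact hzx i hi p hp
      have c4' : Nat.Coprime (∏ b ∈ X, b) (nn i) := by
        refine Nat.Coprime.prod_left fun b hb => ?_
        obtain ⟨p, hp, rfl⟩ := hXprop b hb
        exact (hL p hp).2.2.2.2.2.2.2.2 i hiIcc
      exact (((c1.mul c2).mul c3).mul c4).mul_right
        (((c1'.mul c2').mul c3').mul c4')
    obtain ⟨i', x, hi'1, hi'2, hi'Φ, hx1, hxrough, hxG, hxzn, hixA⟩ :=
      window k l hk A H0 hA hnot Φ zf nn G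
        (fun i hi => by
          have := Finset.mem_Icc.1 (hΦIcc i hi)
          omega)
        hz0
        (fun i hi => ⟨hnnH0 i (hΦIcc i hi), hnnpos i (hΦIcc i hi),
          hnnrough i (hΦIcc i hi)⟩)
        (fun i hi j hj hij => by
          have hiI := hΦIcc i hi
          have hjI := hΦIcc j hj
          exact ((hzpair i hi j hj hij).mul_right (hznn i hi j hjI)).mul
            (((hznn j hj i hiI).symm).mul_right (hnnpair i hiI j hjI hij)))
        hG0 hGPP hGzn
    refine ⟨i', x, hi'1, hi'2, hi'Φ, hx1, hxrough, hixA, ?_, ?_, ?_, ?_⟩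
    · exact hxG.coprime_dvd_right hEG
    · intro j hj
      by_cases hjΦ : j ∈ Φ
      · exact (hxzn j hjΦ).coprime_dvd_right (dvd_mul_left _ _)
      · exact hxG.coprime_dvd_right (hnnG j hj hjΦ)
    · intro p hp
      exact hxG.coprime_dvd_right (hXG p hp)
    · intro i hi
      exact (hxzn i hi).coprime_dvd_right (dvd_mul_right _ _)
  -- the step
  have hstep : ∀ L o, Inv L o →
      ∃ L' o', Inv L' o' ∧
        L'.length + (o'.elim 0 (fun _ => 1)) = L.length + (o.elim 0 (fun _ => 1)) + 1 := by
    intro L o hInv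
    obtain ⟨hIL, hIP, hIa⟩ := hInv
    rcases o with _ | a
    · -- no blocker yet : forbidden slots are F₀ only
      obtain ⟨i', x, hi'1, hi'2, hi'Φ, hx1, hxrough, hixA, hxE, hxnn, hxL, hxz⟩ :=
        hcore L F₀ y hIL hF₀Icc
          (fun i hi => by
            have h1 := ((hF₀mem i).1 hi).1
            exact ⟨hypos i h1, hy2 i h1, hyA i h1⟩)
          (fun i hi => hyE i ((hF₀mem i).1 hi).1)
          (fun i hi j hj hij => hyy i ((hF₀mem i).1 hi).1 j ((hF₀mem j).1 hj).1 hij)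
          (fun i hi j hj => (hnnB j hj i ((hF₀mem i).1 hi).1 (y i)
            (hy1 i ((hF₀mem i).1 hi).1)).symm)
          (fun i hi p hp => (hIL p hp).2.2.2.2.2.2.2.1 i hi)
      by_cases hone : i' = 1
      · subst hone
        refine ⟨L, some x, ⟨hIL, hIP, ?_⟩, by simp⟩
        intro a ha
        have hax : a = x := by injection ha with h'; exact h'.symm
        subst hax
        refine ⟨⟨by simpa using hixA, hxrough, hx1, hxE, fun u hu => hxz u hu,
          hxnn⟩, fun p hp => (hxL p hp).symm⟩
      · have hi'F : i' ∉ F := by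
          intro hmem
          exact hi'Φ ((hF₀mem i').2 ⟨hmem, hi'2⟩)
        refine ⟨(i', x) :: L, none, ⟨?_, ?_, by simp⟩, by simp⟩
        · intro p hp
          rcases List.mem_cons.1 hp with rfl | hp'
          · exact ⟨by omega, hi'2, hi'F, hx1, hxrough, hixA, hxE,
              fun u hu => hxz u hu, hxnn⟩
          · exact hIL p hp'
        · refine List.Pairwise.cons ?_ hIP
          intro q hq
          refine ⟨hxL q hq, fun e => ?_⟩
          have hc := hxL q hq
          rw [← e] at hc
          rw [Nat.Coprime, Nat.gcd_self] at hc
          omega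
    · -- blocker a present
      obtain ⟨hAa, hLa⟩ := hIa a rfl
      obtain ⟨ha1, ha2, ha3, ha4, ha5, ha6⟩ := hAa
      set Φa : Finset ℕ := insert 1 F₀ with hΦadef
      set zfa : ℕ → ℕ := fun i => if i = 1 then a else y i with hzfadef
      have h1Icc : (1 : ℕ) ∈ Finset.Icc 1 (2*l+1) := by
        rw [Finset.mem_Icc]; omega
      have hΦamem : ∀ i, i ∈ Φa ↔ i = 1 ∨ i ∈ F₀ := by
        intro i; rw [hΦadef, Finset.mem_insert]
      have hzfa1 : zfa 1 = a := by simp [hzfadef]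
      have hzfaF : ∀ i ∈ F₀, zfa i = y i := by
        intro i hi
        have h2 : 2 ≤ i := hF2 i ((hF₀mem i).1 hi).1
        simp only [hzfadef, if_neg (by omega : i ≠ 1)]
      obtain ⟨i', x, hi'1, hi'2, hi'Φ, hx1, hxrough, hixA, hxE, hxnn, hxL, hxz⟩ :=
        hcore L Φa zfa hIL
          (by
            intro i hi
            rcases (hΦamem i).1 hi with rfl | hi'
            · exact h1Icc
            · exact hF₀Icc i hi')
          (by
            intro i hi
            rcases (hΦamem i).1 hi with rfl | hi'
            · rw [hzfa1]
              exact ⟨by omega, ha2, by simpa using ha1⟩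
            · rw [hzfaF i hi']
              have h1 := ((hF₀mem i).1 hi').1
              exact ⟨hypos i h1, hy2 i h1, hyA i h1⟩)
          (by
            intro i hi
            rcases (hΦamem i).1 hi with rfl | hi'
            · rw [hzfa1]; exact ha4
            · rw [hzfaF i hi']; exact hyE i ((hF₀mem i).1 hi').1)
          (by
            intro i hi j hj hij
            rcases (hΦamem i).1 hi with rfl | hi' <;>
              rcases (hΦamem j).1 hj with rfl | hj'
            · omega
            · rw [hzfa1, hzfaF j hj']
              exact ha5 j hj'
            · rw [hzfa1, hzfaF i hi']
              exact (ha5 i hi').symm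
            · rw [hzfaF i hi', hzfaF j hj']
              exact hyy i ((hF₀mem i).1 hi').1 j ((hF₀mem j).1 hj').1 hij)
          (by
            intro i hi j hj
            rcases (hΦamem i).1 hi with rfl | hi'
            · rw [hzfa1]; exact ha6 j hj
            · rw [hzfaF i hi']
              exact (hnnB j hj i ((hF₀mem i).1 hi').1 (y i)
                (hy1 i ((hF₀mem i).1 hi').1)).symm)
          (by
            intro i hi p hp
            rcases (hΦamem i).1 hi with rfl | hi'
            · rw [hzfa1]; exact hLa p hp
            · rw [hzfaF i hi']
              exact (hIL p hp).2.2.2.2.2.2.2.1 i hi')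
      have hone : i' ≠ 1 := by
        intro e
        exact hi'Φ ((hΦamem i').2 (Or.inl e))
      have hi'F : i' ∉ F := by
        intro hmem
        exact hi'Φ ((hΦamem i').2 (Or.inr ((hF₀mem i').2 ⟨hmem, hi'2⟩)))
      have hxa : Nat.Coprime x a := by
        have := hxz 1 ((hΦamem 1).2 (Or.inl rfl))
        rwa [hzfa1] at this
      refine ⟨(i', x) :: L, some a, ⟨?_, ?_, ?_⟩, by simp⟩
      · intro p hp
        rcases List.mem_cons.1 hp with rfl | hp'
        · refine ⟨by omega, hi'2, hi'F, hx1, hxrough, hixA, hxE, ?_, hxnn⟩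
          intro u hu
          have := hxz u ((hΦamem u).2 (Or.inr hu))
          rwa [hzfaF u hu] at this
        · exact hIL p hp'
      · refine List.Pairwise.cons ?_ hIP
        intro q hq
        exact ⟨hxL q hq, fun e => by
          have hc := hxL q hq
          rw [← e] at hc
          rw [Nat.Coprime, Nat.gcd_self] at hc
          omega⟩
      · intro a' ha'
        have haa : a' = a := by injection ha' with h'; exact h'.symm
        subst haa
        refine ⟨⟨ha1, ha2, ha3, ha4, ha5, ha6⟩, ?_⟩
        intro p hp
        rcases List.mem_cons.1 hp with rfl | hp'
        · exact hxa
        · exact hLa p hp'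
  -- iterate the window construction
  have hiter : ∀ Nst : ℕ, ∃ L o, Inv L o ∧ Nst ≤ L.length + (o.elim 0 fun _ => 1) := by
    intro Nst
    induction Nst with
    | zero => exact ⟨[], none, ⟨by simp, List.Pairwise.nil, by simp⟩, by simp⟩
    | succ n ih =>
      obtain ⟨L, o, hInv, hlen⟩ := ih
      obtain ⟨L', o', hInv', hlen'⟩ := hstep L o hInv
      exact ⟨L', o', hInv', by omega⟩
  obtain ⟨L, o, ⟨hIL, hIP, hIa⟩, hlen⟩ := hiter (2*l*h + 2)
  have hoel : (o.elim 0 fun _ => 1) ≤ 1 := by cases o <;> simp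
  have hLlen : 2*l*h + 1 ≤ L.length := by omega
  have hnodup : L.Nodup := hIP.imp (fun hR e => hR.2 (congrArg Prod.snd e))
  set S : Finset (ℕ × ℕ) := L.toFinset with hSdef
  have hSmemL : ∀ p : ℕ × ℕ, p ∈ S ↔ p ∈ L := fun p => List.mem_toFinset
  have hScard : S.card = L.length := List.toFinset_card_of_nodup hnodup
  set T : Finset ℕ := (Finset.Icc 2 (2*l+1)).filter (fun u => u ∉ F) with hTdef
  have hmaps : ∀ p ∈ S, p.1 ∈ T := by
    intro p hp
    have hP := hIL p ((hSmemL p).1 hp)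
    rw [hTdef, Finset.mem_filter, Finset.mem_Icc]
    exact ⟨⟨hP.1, hP.2.1⟩, hP.2.2.1⟩
  have hTcard : T.card ≤ 2*l := by
    calc T.card ≤ (Finset.Icc 2 (2*l+1)).card := Finset.card_filter_le _ _
      _ = 2*l := by rw [Nat.card_Icc]; omega
  have hlt : T.card * h < S.card := by
    have h9 : T.card * h ≤ 2*l*h := Nat.mul_le_mul_right h hTcard
    omega
  obtain ⟨u', hu'T, hfib⟩ :=
    Finset.exists_lt_card_fiber_of_mul_lt_card_of_maps_to hmaps hlt
  obtain ⟨hu'Icc, hu'F⟩ := Finset.mem_filter.1 hu'T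
  obtain ⟨hu'2, hu'le⟩ := Finset.mem_Icc.1 hu'Icc
  set Q : Finset (ℕ × ℕ) := S.filter (fun p => p.1 = u') with hQdef
  have hinj : Set.InjOn Prod.snd (↑Q : Set (ℕ × ℕ)) := by
    intro p hp q hq hpq
    have hp1 := (Finset.mem_filter.1 (Finset.mem_coe.1 hp)).2
    have hq1 := (Finset.mem_filter.1 (Finset.mem_coe.1 hq)).2
    exact Prod.ext (hp1.trans hq1.symm) hpq
  set X1 : Finset ℕ := Q.image Prod.snd with hX1def
  have hX1card : X1.card = Q.card := Finset.card_image_of_injOn hinj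
  obtain ⟨X2, hX2sub, hX2card⟩ := Finset.exists_subset_card_eq (s := X1) (n := h) (by omega)
  have hX2prop : ∀ x ∈ X2, ∃ p ∈ L, p.1 = u' ∧ p.2 = x := by
    intro x hx
    have h9 := hX2sub hx
    rw [hX1def, Finset.mem_image] at h9
    obtain ⟨p, hp, rfl⟩ := h9
    obtain ⟨hpS, hp1⟩ := Finset.mem_filter.1 hp
    exact ⟨p, (hSmemL p).1 hpS, hp1, rfl⟩
  have hsymm : Symmetric (fun p q : ℕ × ℕ => Nat.Coprime p.2 q.2 ∧ p.2 ≠ q.2) :=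
    fun p q hpq => ⟨hpq.1.symm, hpq.2.symm⟩
  have hLpair := haveI : Std.Symm (fun p q : ℕ × ℕ => Nat.Coprime p.2 q.2 ∧ p.2 ≠ q.2) := ⟨hsymm⟩; List.Pairwise.forall hIP
  refine ⟨u', hu'F, hu'2, hu'le, ?_⟩
  have hsub' : F ∪ {u'} ⊆ Tset l \ {1} := by
    rintro v (hv | hv)
    · exact hF hv
    · simp only [Set.mem_singleton_iff] at hv
      subst hv
      constructor
      · exact mem_Tset_of_le (by omega) hu'le
      · simp only [Set.mem_singleton_iff]
        omega
  set Bfam : ℕ → Set ℕ := fun v => if v = u' then (↑X2 : Set ℕ) else ↑(C v)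
    with hBfamdef
  have hBfamF : ∀ v ∈ F, Bfam v = ↑(C v) := by
    intro v hv
    have hvne : v ≠ u' := fun e => hu'F (e ▸ hv)
    simp only [hBfamdef, if_neg hvne]
  have hBfamu : Bfam u' = ↑X2 := by simp only [hBfamdef, if_pos rfl]
  refine ⟨hsub', Bfam, ?_, ?_⟩
  · rintro v (hv | hv)
    · rw [hBfamF v hv]
      refine ⟨⟨?_, ?_⟩, ?_, ?_⟩
      · intro x hx
        exact (hB1 v hv).1.1 x (hCB v hv x (Finset.mem_coe.1 hx))
      · intro a ha b hb hab
        exact (hB1 v hv).1.2 a (hCB v hv a (Finset.mem_coe.1 ha))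
          b (hCB v hv b (Finset.mem_coe.1 hb)) hab
      · rw [Set.ncard_coe_finset]; exact hC2 v hv
      · intro x hx
        exact (hB1 v hv).2.2 x (hCB v hv x (Finset.mem_coe.1 hx))
    · simp only [Set.mem_singleton_iff] at hv
      subst hv
      rw [hBfamu]
      refine ⟨⟨?_, ?_⟩, ?_, ?_⟩
      · intro x hx
        obtain ⟨p, hpL, hp1, hp2⟩ := hX2prop x (Finset.mem_coe.1 hx)
        have h9 := (hIL p hpL).2.2.2.1
        omega
      · intro a ha b hb hab
        obtain ⟨p, hpL, hp1, hp2⟩ := hX2prop a (Finset.mem_coe.1 ha)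
        obtain ⟨q, hqL, hq1, hq2⟩ := hX2prop b (Finset.mem_coe.1 hb)
        have hpq : p ≠ q := fun e => hab (by rw [← hp2, ← hq2, e])
        have h9 := (hLpair hpL hqL hpq).1
        rw [hp2, hq2] at h9
        exact h9
      · rw [Set.ncard_coe_finset]; exact hX2card
      · intro x hx
        obtain ⟨p, hpL, hp1, hp2⟩ := hX2prop x (Finset.mem_coe.1 hx)
        have h9 := (hIL p hpL).2.2.2.2.2.1
        rw [hp1, hp2] at h9
        exact h9
  · intro u hu v hv huv xx hxx yy hyy
    rcases hu with hu | hu <;> rcases hv with hv | hv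
    · rw [hBfamF u hu] at hxx
      rw [hBfamF v hv] at hyy
      exact hB2 u hu v hv huv xx (hCB u hu xx (Finset.mem_coe.1 hxx))
        yy (hCB v hv yy (Finset.mem_coe.1 hyy))
    · simp only [Set.mem_singleton_iff] at hv
      subst hv
      rw [hBfamF u hu] at hxx
      rw [hBfamu] at hyy
      obtain ⟨p, hpL, hp1, hp2⟩ := hX2prop yy (Finset.mem_coe.1 hyy)
      have h9 : Nat.Coprime p.2 E := (hIL p hpL).2.2.2.2.2.2.1
      have h10 : xx ∣ E := hdvdE u hu xx (Finset.mem_coe.1 hxx)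
      rw [hp2] at h9
      exact (h9.coprime_dvd_right h10).symm
    · simp only [Set.mem_singleton_iff] at hu
      subst hu
      rw [hBfamu] at hxx
      rw [hBfamF v hv] at hyy
      obtain ⟨p, hpL, hp1, hp2⟩ := hX2prop xx (Finset.mem_coe.1 hxx)
      have h9 : Nat.Coprime p.2 E := (hIL p hpL).2.2.2.2.2.2.1
      have h10 : yy ∣ E := hdvdE v hv yy (Finset.mem_coe.1 hyy)
      rw [hp2] at h9
      exact h9.coprime_dvd_right h10
    · simp only [Set.mem_singleton_iff] at hu hv
      exact absurd (hu.trans hv.symm) huv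

end Triveni16

/-- Triveni triplets of strictly higher order exist. -/
theorem higher_order_triveni (k l : ℕ) (hk : 0 < k) (hl : 0 < l)
    (H0 : Set ℕ) (hH0inf : H0.Infinite) (hH0 : PairwisePrimeSet H0)
    (A : Set ℕ) (hA : SyndeticWith A (2 * l + 1))
    (hnot : ¬∃ x r n : ℕ, n ∈ H0 ∧ 0 < r ∧ r ≡ 1 [MOD n] ∧
      x ∈ A ∧ x * n ^ k * r ∈ A)
    (F : Set ℕ) (hF : F ⊆ Tset l \ {1})
    (hTriv : ∀ h : ℕ, 0 < h → TriveniTriplet A F h l) :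
    ∃ F' : Set ℕ, F ⊂ F' ∧ F' ⊆ Tset l \ {1} ∧
      ∀ h : ℕ, 0 < h → TriveniTriplet A F' h l := by
  classical
  have hper := Triveni16.per_h k l hk hl H0 hH0inf hH0 A hA hnot F hF hTriv
  have hexists : ∃ u', u' ∉ F ∧ 2 ≤ u' ∧ u' ≤ 2*l+1 ∧
      ∀ h : ℕ, 0 < h → TriveniTriplet A (F ∪ {u'}) h l := by
    by_contra hno
    push_neg at hno
    set T : Finset ℕ := (Finset.Icc 2 (2*l+1)).filter (fun u => u ∉ F) with hT
    have hch : ∀ u' ∈ T, ∃ hh : ℕ, 0 < hh ∧ ¬ TriveniTriplet A (F ∪ {u'}) hh l := by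
      intro u' hu'
      obtain ⟨h1, h2⟩ := Finset.mem_filter.1 hu'
      obtain ⟨h3, h4⟩ := Finset.mem_Icc.1 h1
      exact hno u' h2 h3 h4
    choose! g hg1 hg2 using hch
    set Hb := (T.sup g) + 1 with hHb
    obtain ⟨u', hu1, hu2, hu3, htr⟩ := hper Hb (by omega)
    have hu'T : u' ∈ T := Finset.mem_filter.2 ⟨Finset.mem_Icc.2 ⟨hu2, hu3⟩, hu1⟩
    have hgle : g u' ≤ T.sup g := Finset.le_sup hu'T
    have h5 : TriveniTriplet A (F ∪ {u'}) (g u') l :=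
      Triveni16.triveni_mono (by omega) htr
    exact hg2 u' hu'T h5
  obtain ⟨u', hu1, hu2, hu3, hall⟩ := hexists
  refine ⟨F ∪ {u'}, Set.ssubset_iff_subset_ne.2 ⟨Set.subset_union_left, ?_⟩,
    (hall 1 one_pos).1, hall⟩
  intro e
  have hm : u' ∈ F ∪ {u'} := Set.mem_union_right F rfl
  rw [← e] at hm
  exact hu1 hm
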